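/- arXiv:2106.00336 — 5 statements merged into one kernel-verified Lean document; each statement's English description precedes it below -/
import Mathlib

section
/- Let A be a left-symmetric algebra, θ a 2-cocycle on A with values in V, and A_θ the corresponding central extension. Then the annihilator of A_θ equals (Ann(θ) ∩ Ann(A)) ⊕ V, where Ann(θ) = {x ∈ A : θ(x,A) + θ(A,x) = 0} and Ann(A) = {x ∈ A : xA + Ax = 0}. -/
/-- The central extension product on `A ⊕ V`. -/
def extMul {A V : Type*} [AddCommGroup A] [Module ℂ A] [AddCommGroup V] [Module ℂ V]
    (mul : A →ₗ[ℂ] A →ₗ[ℂ] A) (θ : A →ₗ[ℂ] A →ₗ[ℂ] V) (p q : A × V) : A × V :=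
  (mul p.1 q.1, θ p.1 q.1)

/-- For a left-symmetric algebra `A` and a 2-cocycle `θ` with values
in `V`, the annihilator of the central extension `A_θ` equals
`(Ann(θ) ∩ Ann(A)) ⊕ V`: an element `p = (x, v)` of `A ⊕ V` annihilates `A_θ`
on both sides if and only if `x ∈ Ann(A)` and `x ∈ Ann(θ)` (and `v ∈ V` is
arbitrary). -/
theorem annihilator_of_central_extension
    {A V : Type*} [AddCommGroup A] [Module ℂ A] [AddCommGroup V] [Module ℂ V]
    (mul : A →ₗ[ℂ] A →ₗ[ℂ] A) (θ : A →ₗ[ℂ] A →ₗ[ℂ] V)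
    (hLS : ∀ x y z : A,
      mul (mul x y) z - mul x (mul y z) = mul (mul y x) z - mul y (mul x z))
    (hθ : ∀ x y z : A,
      θ (mul x y) z - θ x (mul y z) = θ (mul y x) z - θ y (mul x z)) :
    ∀ p : A × V,
      (∀ q : A × V, extMul mul θ p q = 0 ∧ extMul mul θ q p = 0) ↔
      ((∀ y : A, mul p.1 y = 0 ∧ mul y p.1 = 0) ∧
       (∀ y : A, θ p.1 y = 0 ∧ θ y p.1 = 0)) := by
  intro p
  constructor
  · intro h
    refine ⟨fun y => ?_, fun y => ?_⟩
    · exact ⟨congrArg Prod.fst (h (y,0)).1, congrArg Prod.fst (h (y,0)).2⟩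
    · exact ⟨congrArg Prod.snd (h (y,0)).1, congrArg Prod.snd (h (y,0)).2⟩
  · rintro ⟨h1, h2⟩ q
    constructor <;> · simp [extMul, (h1 q.1).1, (h1 q.1).2, (h2 q.1).1, (h2 q.1).2, Prod.ext_iff]
end

section
/- The 4-dimensional complex algebra L⁴₀₁ with basis e₁,e₂,e₃,e₄ and nonzero products e₁e₁ = e₂, e₁e₂ = e₄, e₂e₃ = e₄, e₃e₁ = e₄ is a nilpotent left-symmetric algebra that is not a Novikov algebra. -/
/-- Span of the set of products of an element of `S` with an element of `T`. -/
def mulSpan {V : Type*} [AddCommGroup V] [Module ℂ V] (mul : V → V → V)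
    (S T : Submodule ℂ V) : Submodule ℂ V :=
  Submodule.span ℂ {z | ∃ x ∈ S, ∃ y ∈ T, z = mul x y}

/-- `piece mul n` is the span of all products of `n + 1` elements of the
algebra `(V, mul)`, with all possible bracketings. -/
def piece {V : Type*} [AddCommGroup V] [Module ℂ V] (mul : V → V → V) : ℕ → Submodule ℂ V
  | 0 => ⊤
  | n + 1 => ⨆ i : Fin (n + 1), mulSpan mul (piece mul i.1) (piece mul (n - i.1))

/-- An algebra is nilpotent if some power (with all bracketings) is zero. -/
def IsNilpotentMul {V : Type*} [AddCommGroup V] [Module ℂ V] (mul : V → V → V) : Prop :=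
  ∃ n : ℕ, piece mul n = ⊥

/-- Multiplication of the algebra `L⁴₀₁`: on the basis `e₁, e₂, e₃, e₄`
(indexed `0,…,3`) the nonzero products are
`e₁e₁ = e₂`, `e₁e₂ = e₄`, `e₂e₃ = e₄`, `e₃e₁ = e₄`. -/
def mulL401 (x y : Fin 4 → ℂ) : Fin 4 → ℂ :=
  ![0, x 0 * y 0, 0, x 0 * y 1 + x 1 * y 2 + x 2 * y 0]

/-- Subspace `{v | v 0 = 0 ∧ v 2 = 0}`. -/
noncomputable def Wsub : Submodule ℂ (Fin 4 → ℂ) where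
  carrier := {v | v 0 = 0 ∧ v 2 = 0}
  add_mem' ha hb := by simp_all
  zero_mem' := by simp
  smul_mem' c v hv := by simp_all

/-- Subspace `{v | v 0 = 0 ∧ v 1 = 0 ∧ v 2 = 0}`. -/
noncomputable def Usub : Submodule ℂ (Fin 4 → ℂ) where
  carrier := {v | v 0 = 0 ∧ v 1 = 0 ∧ v 2 = 0}
  add_mem' ha hb := by simp_all
  zero_mem' := by simp
  smul_mem' c v hv := by simp_all

lemma p1_le : piece mulL401 1 ≤ Wsub := by
  rw [piece]
  refine iSup_le fun i => ?_
  refine Submodule.span_le.2 ?_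
  rintro z ⟨x, -, y, -, rfl⟩
  constructor <;> simp [mulL401, Wsub]

lemma mul_mem_U {x y : Fin 4 → ℂ} (h : x ∈ Wsub ∨ y ∈ Wsub) : mulL401 x y ∈ Usub := by
  refine ⟨rfl, ?_, rfl⟩
  rcases h with ⟨h0, h2⟩ | ⟨h0, h2⟩ <;> simp [mulL401, h0]

lemma p2_le : piece mulL401 2 ≤ Usub := by
  rw [piece]
  refine iSup_le fun i => ?_
  refine Submodule.span_le.2 ?_
  rintro z ⟨x, hx, y, hy, rfl⟩
  fin_cases i
  · exact mul_mem_U (Or.inr (p1_le hy))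
  · exact mul_mem_U (Or.inl (p1_le hx))

lemma mul_zero_of_U {x y : Fin 4 → ℂ} (h : x ∈ Usub ∨ y ∈ Usub) : mulL401 x y = 0 := by
  funext i
  rcases h with ⟨h0, h1, h2⟩ | ⟨h0, h1, h2⟩ <;>
    fin_cases i <;> simp_all [mulL401]

lemma p3_eq : piece mulL401 3 = ⊥ := by
  rw [piece]
  refine le_bot_iff.1 (iSup_le fun i => Submodule.span_le.2 ?_)
  rintro z ⟨x, hx, y, hy, rfl⟩
  fin_cases i
  · simpa using mul_zero_of_U (Or.inr (p2_le hy))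
  · have : mulL401 x y = 0 := by
      obtain ⟨-, hx2⟩ := p1_le hx
      obtain ⟨hy0, -⟩ := p1_le hy
      funext i; fin_cases i <;> simp_all [mulL401, (p1_le hx).1, (p1_le hy).2]
    simpa using this
  · simpa using mul_zero_of_U (Or.inl (p2_le hx))

/-- `L⁴₀₁` is a nilpotent left-symmetric algebra that is not a
Novikov algebra. -/
theorem L401_nilpotent_leftSymmetric_not_novikov :
    (∀ x y z : Fin 4 → ℂ,
      mulL401 (mulL401 x y) z - mulL401 x (mulL401 y z) =
      mulL401 (mulL401 y x) z - mulL401 y (mulL401 x z)) ∧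
    IsNilpotentMul mulL401 ∧
    ¬ (∀ x y z : Fin 4 → ℂ, mulL401 (mulL401 x y) z = mulL401 (mulL401 x z) y) := by
  refine ⟨?_, ⟨3, p3_eq⟩, ?_⟩
  · intro x y z
    funext i
    fin_cases i <;> simp [mulL401] <;> ring
  · intro h
    have := congrFun (h ![1,0,0,0] ![1,0,0,0] ![0,0,1,0]) 3
    simp [mulL401] at this
end

section
/- The 3-dimensional complex algebra L³*₀₅ with basis e₁,e₂,e₃ and nonzero products e₁e₁ = e₂, e₂e₁ = e₃ is a nilpotent Novikov algebra, and its automorphism group consists exactly of the linear maps φ with matrix rows (x,0,0), (y,x²,0), (z,xy,x³) with x ≠ 0, in the basis e₁,e₂,e₃. -/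
/-- Multiplication of the algebra `L³*₀₅`: on the basis `e₁, e₂, e₃`
(indexed `0,1,2`) the nonzero products are `e₁e₁ = e₂`, `e₂e₁ = e₃`. -/
def mulL305 (x y : Fin 3 → ℂ) : Fin 3 → ℂ :=
  ![0, x 0 * y 0, x 1 * y 0]

/-- The standard basis vector. -/
def e (i : Fin 3) : Fin 3 → ℂ := Pi.single i 1

/-- Auxiliary filtration. -/
noncomputable def Qfil : ℕ → Submodule ℂ (Fin 3 → ℂ)
  | 0 => ⊤
  | 1 => LinearMap.ker (LinearMap.proj (0 : Fin 3))
  | 2 => LinearMap.ker (LinearMap.proj (0 : Fin 3)) ⊓ LinearMap.ker (LinearMap.proj (1 : Fin 3))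
  | _ + 3 => ⊥

lemma mul_eq_zero_right {x y : Fin 3 → ℂ} (hy : y 0 = 0) : mulL305 x y = 0 := by
  funext i; fin_cases i <;> simp [mulL305, hy]

lemma mem_Qfil_mul {i j : ℕ} {x y : Fin 3 → ℂ} (hx : x ∈ Qfil i) (hy : y ∈ Qfil j) :
    mulL305 x y ∈ Qfil (i + j + 1) := by
  match j with
  | 1 =>
    rw [mul_eq_zero_right (by simpa [Qfil] using hy)]; exact zero_mem _
  | 2 =>
    rw [mul_eq_zero_right (by simp [Qfil] at hy; exact hy.1)]; exact zero_mem _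
  | j + 3 =>
    rw [mul_eq_zero_right (by simp [Qfil] at hy; simp [hy])]; exact zero_mem _
  | 0 =>
    match i with
    | 0 => show mulL305 x y ∈ Qfil 1; simp [Qfil, mulL305]
    | 1 =>
      show mulL305 x y ∈ Qfil 2
      simp [Qfil] at hx ⊢
      simp [mulL305, hx]
    | 2 =>
      show mulL305 x y ∈ Qfil 3
      simp [Qfil] at hx ⊢
      funext k; fin_cases k <;> simp [mulL305, hx.1, hx.2]
    | i + 3 =>
      simp [Qfil] at hx
      show mulL305 x y ∈ Qfil (i + 3 + 0 + 1)
      have : mulL305 x y = 0 := by funext k; fin_cases k <;> simp [mulL305, hx]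
      rw [this]; exact zero_mem _

lemma piece_le_Qfil : ∀ n, piece mulL305 n ≤ Qfil n := by
  intro n
  induction n using Nat.strong_induction_on with
  | _ n ih =>
    match n with
    | 0 => exact le_top
    | n + 1 =>
      rw [piece]
      refine iSup_le fun i => ?_
      refine Submodule.span_le.mpr ?_
      rintro _ ⟨u, hu, v, hv, rfl⟩
      have h1 : u ∈ Qfil i.1 := ih i.1 (by omega) hu
      have h2 : v ∈ Qfil (n - i.1) := ih (n - i.1) (by omega) hv
      have := mem_Qfil_mul h1 h2
      have heq : i.1 + (n - i.1) + 1 = n + 1 := by omega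
      rwa [heq] at this

lemma vec_decomp (v : Fin 3 → ℂ) : v = v 0 • e 0 + v 1 • e 1 + v 2 • e 2 := by
  funext i; fin_cases i <;> simp [e]

/-- `L³*₀₅` is a nilpotent Novikov algebra (left-symmetric and
right-commutative), and its automorphism group consists exactly of the
invertible linear maps with matrix rows `(x,0,0)`, `(y,x²,0)`, `(z,xy,x³)`,
`x ≠ 0`, i.e. `φ(e₁) = xe₁ + ye₂ + ze₃`, `φ(e₂) = x²e₂ + xye₃`,
`φ(e₃) = x³e₃`. -/
theorem L305_novikov_nilpotent_automorphisms :
    (∀ x y z : Fin 3 → ℂ,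
      mulL305 (mulL305 x y) z - mulL305 x (mulL305 y z) =
      mulL305 (mulL305 y x) z - mulL305 y (mulL305 x z)) ∧
    (∀ x y z : Fin 3 → ℂ, mulL305 (mulL305 x y) z = mulL305 (mulL305 x z) y) ∧
    IsNilpotentMul mulL305 ∧
    (∀ φ : (Fin 3 → ℂ) ≃ₗ[ℂ] (Fin 3 → ℂ),
      (∀ a b : Fin 3 → ℂ, φ (mulL305 a b) = mulL305 (φ a) (φ b)) ↔
      (∃ x y z : ℂ, x ≠ 0 ∧
        φ (e 0) = x • e 0 + y • e 1 + z • e 2 ∧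
        φ (e 1) = x ^ 2 • e 1 + (x * y) • e 2 ∧
        φ (e 2) = x ^ 3 • e 2)) := by
  refine ⟨?_, ?_, ?_, ?_⟩
  · intro x y z; funext i; fin_cases i <;>
      simp only [mulL305, Pi.sub_apply, Fin.zero_eta, Fin.mk_one, Fin.isValue,
        Matrix.cons_val_zero, Matrix.cons_val_one, Matrix.head_cons,
        Matrix.cons_val_two, Matrix.tail_cons] <;> ring
  · intro x y z; funext i; fin_cases i <;>
      simp only [mulL305, Fin.zero_eta, Fin.mk_one, Fin.isValue,
        Matrix.cons_val_zero, Matrix.cons_val_one, Matrix.head_cons,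
        Matrix.cons_val_two, Matrix.tail_cons] <;> ring
  · exact ⟨3, le_bot_iff.mp (piece_le_Qfil 3)⟩
  · intro φ
    constructor
    · intro h
      set x := φ (e 0) 0 with hx
      set y := φ (e 0) 1 with hy
      set z := φ (e 0) 2 with hz
      have he0 : φ (e 0) = x • e 0 + y • e 1 + z • e 2 := vec_decomp _
      have me1 : mulL305 (e 0) (e 0) = e 1 := by
        funext i; fin_cases i <;> simp [mulL305, e]
      have me2 : mulL305 (e 1) (e 0) = e 2 := by
        funext i; fin_cases i <;> simp [mulL305, e]
      have he1 : φ (e 1) = x ^ 2 • e 1 + (x * y) • e 2 := by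
        rw [← me1, h, he0]
        funext i; fin_cases i <;> simp [mulL305, e] <;> ring
      have he2 : φ (e 2) = x ^ 3 • e 2 := by
        rw [← me2, h, he1, he0]
        funext i; fin_cases i <;> simp [mulL305, e] <;> ring
      refine ⟨x, y, z, ?_, he0, he1, he2⟩
      intro hx0
      have : φ (e 2) = φ 0 := by rw [he2, hx0, map_zero]; simp
      have := φ.injective this
      have := congrFun this 2
      simp [e] at this
    · rintro ⟨x, y, z, hx0, he0, he1, he2⟩ a b
      have ha := vec_decomp a
      have hb := vec_decomp b
      have hφa : φ a = a 0 • φ (e 0) + a 1 • φ (e 1) + a 2 • φ (e 2) := by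
        conv_lhs => rw [ha]
        simp
      have hφb : φ b = b 0 • φ (e 0) + b 1 • φ (e 1) + b 2 • φ (e 2) := by
        conv_lhs => rw [hb]
        simp
      have hmul : mulL305 a b = (a 0 * b 0) • e 1 + (a 1 * b 0) • e 2 := by
        funext i; fin_cases i <;> simp [mulL305, e]
      have hφm : φ (mulL305 a b) = (a 0 * b 0) • φ (e 1) + (a 1 * b 0) • φ (e 2) := by
        rw [hmul]; simp
      rw [hφm, hφa, hφb, he0, he1, he2]
      funext i; fin_cases i <;> simp [mulL305, e] <;> ring
end

section
/- Up to isomorphism, the unique nontrivial (nonzero product) 2-dimensional nilpotent left-symmetric algebra over ℂ is the algebra with basis e₁,e₂ and only nonzero product e₁e₁ = e₂. That is, any 2-dimensional left-symmetric algebra A with A·A ⊆ Ann(A) and A·A ≠ 0 is isomorphic to this algebra. -/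
/-- Multiplication of the model algebra: basis `e₁, e₂` (indexed `0,1`), only
nonzero product `e₁e₁ = e₂`. -/
def mulL201 (x y : Fin 2 → ℂ) : Fin 2 → ℂ :=
  ![0, x 0 * y 0]

/-- any 2-dimensional left-symmetric algebra `A` over `ℂ` with
`A·A ⊆ Ann(A)` and `A·A ≠ 0` is isomorphic to the algebra with basis `e₁, e₂`
and only nonzero product `e₁e₁ = e₂`; i.e. this is, up to isomorphism, the
unique nontrivial 2-dimensional nilpotent left-symmetric algebra. -/
theorem unique_2dim_nilpotent_leftSymmetric
    {A : Type*} [AddCommGroup A] [Module ℂ A]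
    (hdim : Module.finrank ℂ A = 2)
    (mul : A →ₗ[ℂ] A →ₗ[ℂ] A)
    (hLS : ∀ x y z : A,
      mul (mul x y) z - mul x (mul y z) = mul (mul y x) z - mul y (mul x z))
    (hnil : ∀ x y z : A, mul (mul x y) z = 0 ∧ mul z (mul x y) = 0)
    (hne : ∃ x y : A, mul x y ≠ 0) :
    ∃ φ : A ≃ₗ[ℂ] (Fin 2 → ℂ),
      ∀ a b : A, φ (mul a b) = mulL201 (φ a) (φ b) := by
  classical
  have h1 : ∀ a b c : A, mul (mul a b) c = 0 := fun a b c => (hnil a b c).1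
  have h2 : ∀ a b c : A, mul c (mul a b) = 0 := fun a b c => (hnil a b c).2
  -- Step 1: find u with mul u u ≠ 0
  have key : ∃ u : A, mul u u ≠ 0 := by
    by_contra h
    push_neg at h
    obtain ⟨x, y, hxy⟩ := hne
    have anti : ∀ a b : A, mul a b = - mul b a := by
      intro a b
      have hab : mul (a + b) (a + b) = 0 := h _
      have expand : mul (a + b) (a + b)
          = mul a a + mul a b + (mul b a + mul b b) := by
        simp [map_add]
        abel
      rw [expand, h a, h b] at hab
      simp at hab
      linear_combination (norm := abel) hab
    -- x, y are linearly independent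
    have hli : LinearIndependent ℂ ![x, y] := by
      rw [LinearIndependent.pair_iff]
      intro s t hst
      have ht : t = 0 := by
        have h0 : mul x (s • x + t • y) = 0 := by rw [hst]; simp
        rw [map_add, map_smul, map_smul, h x] at h0
        simp at h0
        rcases h0 with h' | h'
        · exact h'
        · exact absurd h' hxy
      have hs : s = 0 := by
        have h0 : mul y (s • x + t • y) = 0 := by rw [hst]; simp
        rw [map_add, map_smul, map_smul, h y] at h0
        simp at h0
        rcases h0 with h' | h'
        · exact h'
        · refine absurd ?_ hxy
          rw [anti x y, h', neg_zero]
      exact ⟨hs, ht⟩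
    have hb : Fintype.card (Fin 2) = Module.finrank ℂ A := by simp [hdim]
    let b : Module.Basis (Fin 2) ℂ A := basisOfLinearIndependentOfCardEqFinrank hli hb
    have hb0 : b 0 = x := by
      simp [b, coe_basisOfLinearIndependentOfCardEqFinrank]
    have hb1 : b 1 = y := by
      simp [b, coe_basisOfLinearIndependentOfCardEqFinrank]
    set v := mul x y with hv
    have hrep : v = b.repr v 0 • x + b.repr v 1 • y := by
      conv_lhs => rw [← b.sum_repr v]
      rw [Fin.sum_univ_two, hb0, hb1]
    have hxv : mul x v = 0 := h2 x y x
    have hyv : mul y v = 0 := h2 x y y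
    have h1' : b.repr v 1 = 0 := by
      have heq : mul x v = b.repr v 1 • v := by
        conv_lhs => rw [hrep]
        rw [map_add, map_smul, map_smul, h x]
        simp [hv]
      rw [hxv] at heq
      rcases smul_eq_zero.mp heq.symm with h' | h'
      · exact h'
      · exact absurd h' hxy
    have h0' : b.repr v 0 = 0 := by
      have heq : mul y v = b.repr v 0 • mul y x := by
        conv_lhs => rw [hrep]
        rw [map_add, map_smul, map_smul, h y]
        simp
      rw [hyv] at heq
      have hyx : mul y x = -v := by rw [anti y x, hv]
      rw [hyx, smul_neg] at heq
      have h'' := neg_eq_zero.mp heq.symm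
      rcases smul_eq_zero.mp h'' with h' | h'
      · exact h'
      · exact absurd h' hxy
    rw [h0', h1'] at hrep
    simp at hrep
    exact hxy hrep
  obtain ⟨u, hu⟩ := key
  set w := mul u u with hw
  have hw1 : ∀ z : A, mul w z = 0 := fun z => h1 u u z
  have hw2 : ∀ z : A, mul z w = 0 := fun z => h2 u u z
  have hli : LinearIndependent ℂ ![u, w] := by
    rw [LinearIndependent.pair_iff]
    intro s t hst
    have hs : s = 0 := by
      have h0 : mul u (s • u + t • w) = 0 := by rw [hst]; simp
      rw [map_add, map_smul, map_smul, hw2 u, ← hw] at h0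
      simp at h0
      rcases h0 with h' | h'
      · exact h'
      · exact absurd h' hu
    have ht : t = 0 := by
      rw [hs] at hst
      simp at hst
      rcases hst with h' | h'
      · exact h'
      · exact absurd h' hu
    exact ⟨hs, ht⟩
  have hb : Fintype.card (Fin 2) = Module.finrank ℂ A := by simp [hdim]
  let b : Module.Basis (Fin 2) ℂ A := basisOfLinearIndependentOfCardEqFinrank hli hb
  have hb0 : b 0 = u := by
    simp [b, coe_basisOfLinearIndependentOfCardEqFinrank]
  have hb1 : b 1 = w := by
    simp [b, coe_basisOfLinearIndependentOfCardEqFinrank]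
  refine ⟨b.equivFun, ?_⟩
  intro a c
  have hrepa : a = b.repr a 0 • u + b.repr a 1 • w := by
    conv_lhs => rw [← b.sum_repr a]
    rw [Fin.sum_univ_two, hb0, hb1]
  have hrepc : c = b.repr c 0 • u + b.repr c 1 • w := by
    conv_lhs => rw [← b.sum_repr c]
    rw [Fin.sum_univ_two, hb0, hb1]
  have hmul : mul a c = (b.repr a 0 * b.repr c 0) • w := by
    conv_lhs => rw [hrepa, hrepc]
    simp only [map_add, map_smul, LinearMap.add_apply, LinearMap.smul_apply,
      hw1, hw2, ← hw, smul_zero, add_zero, zero_add, smul_smul]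
    rw [mul_comm]
  rw [hmul, map_smul]
  have hφw : b.equivFun w = fun j => if j = 1 then 1 else 0 := by
    funext j
    rw [← hb1, b.equivFun_self]
    simp [eq_comm]
  funext j
  fin_cases j
  · simp [hφw, mulL201]
  · simp [hφw, mulL201, Module.Basis.equivFun_apply]
end

section
/- For each λ ≠ 0, the dimension of the derivation algebra of L⁴₁₂(λ) (basis e₁,...,e₄; e₁e₁=λe₃, e₁e₂=e₄, e₂e₁=e₃, e₂e₂=e₃, e₂e₃=e₄, e₃e₁=λe₄) equals 2. -/
open Finset

/-- Multiplication on `ℂⁿ` given by structure constants `c`. -/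
noncomputable def mulOf {n : ℕ} (c : Fin n → Fin n → Fin n → ℂ) (x y : Fin n → ℂ) : Fin n → ℂ :=
  fun k => ∑ i, ∑ j, x i * y j * c i j k

lemma mulOf_add_left {n : ℕ} (c : Fin n → Fin n → Fin n → ℂ) (x x' y : Fin n → ℂ) :
    mulOf c (x + x') y = mulOf c x y + mulOf c x' y := by
  funext k
  simp [mulOf, add_mul, Finset.sum_add_distrib]

lemma mulOf_add_right {n : ℕ} (c : Fin n → Fin n → Fin n → ℂ) (x y y' : Fin n → ℂ) :
    mulOf c x (y + y') = mulOf c x y + mulOf c x y' := by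
  funext k
  simp [mulOf, mul_add, add_mul, Finset.sum_add_distrib]

lemma mulOf_smul_left {n : ℕ} (c : Fin n → Fin n → Fin n → ℂ) (a : ℂ) (x y : Fin n → ℂ) :
    mulOf c (a • x) y = a • mulOf c x y := by
  funext k
  simp only [mulOf, Pi.smul_apply, smul_eq_mul, Finset.mul_sum]
  congr 1; ext i; congr 1; ext j; ring

lemma mulOf_smul_right {n : ℕ} (c : Fin n → Fin n → Fin n → ℂ) (a : ℂ) (x y : Fin n → ℂ) :
    mulOf c x (a • y) = a • mulOf c x y := by
  funext k
  simp only [mulOf, Pi.smul_apply, smul_eq_mul, Finset.mul_sum]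
  congr 1; ext i; congr 1; ext j; ring

/-- The Lie algebra (here: subspace) of derivations of the algebra on `ℂⁿ`
with structure constants `c`. -/
noncomputable def derSpace {n : ℕ} (c : Fin n → Fin n → Fin n → ℂ) :
    Submodule ℂ ((Fin n → ℂ) →ₗ[ℂ] (Fin n → ℂ)) where
  carrier := {d | ∀ x y : Fin n → ℂ,
    d (mulOf c x y) = mulOf c (d x) y + mulOf c x (d y)}
  add_mem' := by
    intro d e hd he x y
    simp only [LinearMap.add_apply, hd x y, he x y, mulOf_add_left, mulOf_add_right]
    abel
  zero_mem' := by
    intro x y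
    have h0 : ∀ z : Fin n → ℂ, mulOf c 0 z = 0 := by
      intro z; funext k; simp [mulOf]
    have h0' : ∀ z : Fin n → ℂ, mulOf c z 0 = 0 := by
      intro z; funext k; simp [mulOf]
    simp [h0, h0']
  smul_mem' := by
    intro a d hd x y
    simp only [LinearMap.smul_apply, hd x y, mulOf_smul_left, mulOf_smul_right, smul_add]


/-- Structure constants of `L⁴₁₂(λ)` (indices `0,…,3`): the nonzero products
are `e₁e₁ = λe₃`, `e₁e₂ = e₄`, `e₂e₁ = e₃`, `e₂e₂ = e₃`, `e₂e₃ = e₄`,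
`e₃e₁ = λe₄`. -/
def c412 (l : ℂ) : Fin 4 → Fin 4 → Fin 4 → ℂ :=
  ![![![0, 0, l, 0], ![0, 0, 0, 1], ![0, 0, 0, 0], ![0, 0, 0, 0]],
    ![![0, 0, 1, 0], ![0, 0, 1, 0], ![0, 0, 0, 1], ![0, 0, 0, 0]],
    ![![0, 0, 0, l], ![0, 0, 0, 0], ![0, 0, 0, 0], ![0, 0, 0, 0]],
    ![![0, 0, 0, 0], ![0, 0, 0, 0], ![0, 0, 0, 0], ![0, 0, 0, 0]]]

noncomputable def Dmap (i : Fin 4) : (Fin 4 → ℂ) →ₗ[ℂ] (Fin 4 → ℂ) :=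
  (LinearMap.single ℂ (fun _ : Fin 4 => ℂ) 3).comp (LinearMap.proj i)

lemma Dmap_apply (i : Fin 4) (x : Fin 4 → ℂ) : Dmap i x = Pi.single 3 (x i) := rfl

lemma Dmap_mem (l : ℂ) (i : Fin 4) (hi : i = 0 ∨ i = 1) : Dmap i ∈ derSpace (c412 l) := by
  intro x y
  rcases hi with rfl | rfl <;>
  · funext k
    fin_cases k <;>
      simp [mulOf, c412, Dmap_apply, Fin.sum_univ_four, Pi.single_apply,
        Matrix.vecHead, Matrix.vecTail]

lemma Dmap_li : LinearIndependent ℂ ![Dmap 0, Dmap 1] := by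
  rw [linearIndependent_fin2]
  constructor
  · intro h
    have := congrFun (LinearMap.congr_fun h (Pi.single 1 1)) 3
    simp [Dmap_apply, Pi.single_apply] at this
  · intro a h
    have := congrFun (LinearMap.congr_fun h (Pi.single 0 1)) 3
    simp [Dmap_apply, Pi.single_apply] at this

/-- for each `λ ≠ 0`, the derivation algebra of `L⁴₁₂(λ)` has
dimension `2`. -/
theorem L412_derivations_dim_two (l : ℂ) (hl : l ≠ 0) :
    Module.finrank ℂ (derSpace (c412 l)) = 2 := by
  have hspan : derSpace (c412 l) = Submodule.span ℂ (Set.range ![Dmap 0, Dmap 1]) := by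
    apply le_antisymm
    · intro d hd
      have key : ∀ a b k : Fin 4,
          ∑ t, c412 l a b t * d (Pi.single t 1) k
            = (∑ t, d (Pi.single a 1) t * c412 l t b k)
              + ∑ t, d (Pi.single b 1) t * c412 l a t k := by
        intro a b k
        have h := hd (Pi.single a 1) (Pi.single b 1)
        have hm : mulOf (c412 l) (Pi.single a 1) (Pi.single b 1)
            = ∑ t, c412 l a b t • (Pi.single t 1 : Fin 4 → ℂ) := by
          funext k; simp [mulOf, Pi.single_apply, Finset.sum_apply]
        rw [hm, map_sum] at h
        have h2 := congrFun h k
        simp only [Finset.sum_apply, Pi.add_apply, map_smul, Pi.smul_apply, smul_eq_mul] at h2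
        rw [h2]
        congr 1
        · simp [mulOf, Pi.single_apply]
        · simp [mulOf, Pi.single_apply]
      have h31_3 := key 3 1 3
      have h31_2 := key 3 1 2
      have h13_3 := key 1 3 3
      have h02_2 := key 0 2 2
      have h21_2 := key 2 1 2
      have h02_3 := key 0 2 3
      have h21_3 := key 2 1 3
      have h00_2 := key 0 0 2
      have h11_2 := key 1 1 2
      have h10_2 := key 1 0 2
      have h20_3 := key 2 0 3
      have h01_3 := key 0 1 3
      have h00_3 := key 0 0 3
      have h11_3 := key 1 1 3
      have h10_3 := key 1 0 3
      simp [c412, Fin.sum_univ_four, Matrix.vecHead, Matrix.vecTail] at h31_3 h31_2 h13_3 h02_2 h21_2 h02_3 h21_3 h00_2 h11_2 h10_2 h20_3 h01_3 h00_3 h11_3 h10_3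
      have z30 : d (Pi.single 3 1) 0 = 0 := h31_3.symm
      have z31 : d (Pi.single 3 1) 1 = 0 := h31_2.symm
      have z32 : d (Pi.single 3 1) 2 = 0 := h13_3.symm
      have z20 : d (Pi.single 2 1) 0 = 0 := h02_2.resolve_right hl
      have z21 : d (Pi.single 2 1) 1 = 0 := h21_2.symm
      have z01 : d (Pi.single 0 1) 1 = 0 := by linear_combination -h02_3 + h21_2
      have z10 : d (Pi.single 1 1) 0 = 0 := by
        have e : d (Pi.single 1 1) 0 * l = 0 := by linear_combination -h21_3 - z20
        exact (mul_eq_zero.mp e).resolve_right hl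
      have z00 : d (Pi.single 0 1) 0 = 0 := by
        have e : l * d (Pi.single 0 1) 0 = 0 := by
          linear_combination -h00_2 - l*h11_2 + l*h10_2 - h20_3 + l*h01_3
            + (l-1)*z01 + (l^2-l)*z10
        exact (mul_eq_zero.mp e).resolve_left hl
      have z11 : d (Pi.single 1 1) 1 = 0 := by
        linear_combination -h11_2 + h10_2 + z00 + (l-1)*z10 + z01
      have z22 : d (Pi.single 2 1) 2 = 0 := by linear_combination h11_2 + 2*z11 + z10
      have z33 : d (Pi.single 3 1) 3 = 0 := by linear_combination h01_3 + z00 + z11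
      have z23 : d (Pi.single 2 1) 3 = 0 := by
        have e : l * (l * d (Pi.single 2 1) 3) = 0 := by
          linear_combination h00_3 + l^2*h11_3 - l*h10_3 + z01 + l^2*z10
        exact ((mul_eq_zero.mp ((mul_eq_zero.mp e).resolve_left hl)).resolve_left hl)
      have z12 : d (Pi.single 1 1) 2 = 0 := by linear_combination -h11_3 + z23 - z10
      have z02 : d (Pi.single 0 1) 2 = 0 := by linear_combination -h10_3 + z23 - l*z12
      have hrepr : d = d (Pi.single 0 1) 3 • Dmap 0 + d (Pi.single 1 1) 3 • Dmap 1 := by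
        apply Module.Basis.ext (Pi.basisFun ℂ (Fin 4))
        intro i
        funext k
        fin_cases i <;> fin_cases k <;>
          simp [Dmap, Pi.single_apply, z00, z01, z02, z10, z11, z12, z20, z21, z22,
            z23, z30, z31, z32, z33]
      rw [hrepr]
      exact Submodule.add_mem _
        (Submodule.smul_mem _ _ (Submodule.subset_span ⟨0, rfl⟩))
        (Submodule.smul_mem _ _ (Submodule.subset_span ⟨1, rfl⟩))
    · rw [Submodule.span_le]
      rintro x ⟨i, rfl⟩
      fin_cases i
      · exact Dmap_mem l 0 (Or.inl rfl)
      · exact Dmap_mem l 1 (Or.inr rfl)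
  rw [hspan, finrank_span_eq_card Dmap_li]
  simp
end
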